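/- Let M = (S, ρ) be a matroid scheme. Its set of circuits C(M) satisfies: (C1) 0̂ ∉ C(M); (C2) if x, y ∈ C(M) and x ≤ y, then x = y; (C3) if x, y ∈ C(M) with x ≠ y, u ∈ x∨y, and a is an atom of S with a ≤ x∧y, then there exists z ∈ C(M) such that z ≤ u and z ≱ a. -/

import Mathlib

/-- The set of minimal upper bounds of `x` and `y` (denoted `x ∨ y` in the paper). -/
def mub {S : Type*} [PartialOrder S] (x y : S) : Set S :=
  {u | x ≤ u ∧ y ≤ u ∧ ∀ v, x ≤ v → y ≤ v → v ≤ u → v = u}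

/-- The set of maximal lower bounds of `x` and `y` (denoted `x ∧ y` in the paper). -/
def mlb {S : Type*} [PartialOrder S] (x y : S) : Set S :=
  {l | l ≤ x ∧ l ≤ y ∧ ∀ m, m ≤ x → m ≤ y → l ≤ m → m = l}

/-- The set of minimal upper bounds of a subset `T`. -/
def mubSet {S : Type*} [PartialOrder S] (T : Set S) : Set S :=
  {u | (∀ t ∈ T, t ≤ u) ∧ ∀ v, (∀ t ∈ T, t ≤ v) → v ≤ u → v = u}

/-- The number of atoms below `x`, i.e. `|x|`, the rank of `x` in a simplicial poset. -/
noncomputable def natRank {S : Type*} [PartialOrder S] [OrderBot S] (x : S) : ℕ :=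
  Nat.card {a : S // IsAtom a ∧ a ≤ x}

/-- A finite bounded-below poset is simplicial if every lower interval is isomorphic to
the Boolean lattice of subsets of the set of atoms below. -/
def IsSimplicialPoset (S : Type*) [PartialOrder S] [OrderBot S] [Fintype S] : Prop :=
  ∀ x : S, Nonempty (Set.Iic x ≃o Set {a : S // IsAtom a ∧ a ≤ x})

/-- A matroid scheme: a rank function `ρ` on a finite simplicial poset `S`
satisfying (M1)–(M5). -/
structure IsMatroidScheme {S : Type*} [PartialOrder S] [OrderBot S] [Fintype S]
    (ρ : S → ℕ) : Prop where
  simplicial : IsSimplicialPoset S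
  M1 : ∀ x : S, ρ x ≤ natRank x
  M2 : ∀ ⦃x y : S⦄, x ≤ y → ρ x ≤ ρ y
  M3 : ∀ x y u l : S, u ∈ mub x y → l ∈ mlb x y → ρ u + ρ l ≤ ρ x + ρ y
  M4 : ∀ x y l : S, l ∈ mlb x y → ρ x = ρ l → (mub x y).Nonempty
  M5 : ∀ x y : S, ρ x < ρ y →
    ∃ a : S, IsAtom a ∧ a ≤ y ∧ ¬ a ≤ x ∧ (mub x a).Nonempty

/-- `cl` is the closure operator of a matroid scheme `(S, ρ)`:
`cl x` is the greatest element above `x` of the same rank. -/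
def IsClosureFun {S : Type*} [PartialOrder S] (ρ : S → ℕ) (cl : S → S) : Prop :=
  ∀ x : S, x ≤ cl x ∧ ρ (cl x) = ρ x ∧ ∀ y : S, x ≤ y → ρ y = ρ x → y ≤ cl x

/-- The bases of a matroid scheme: the maximal independent elements. -/
def Bases {S : Type*} [PartialOrder S] [OrderBot S] (ρ : S → ℕ) : Set S :=
  {x | ρ x = natRank x ∧ ∀ w, ρ w = natRank w → x ≤ w → w = x}

/-- The circuits of a matroid scheme: the minimal dependent elements. -/
def Circuits {S : Type*} [PartialOrder S] [OrderBot S] (ρ : S → ℕ) : Set S :=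
  {x | ρ x < natRank x ∧ ∀ y, ρ y < natRank y → y ≤ x → y = x}

/-- `c` is the complement `x ∖ a` of `a` in the Boolean lattice `S_{≤ x}`. -/
def IsComplementIn {S : Type*} [PartialOrder S] [OrderBot S] (c a x : S) : Prop :=
  c ≤ x ∧ a ≤ x ∧ (∀ l : S, l ≤ c → l ≤ a → l = ⊥) ∧
    (∀ u : S, u ≤ x → c ≤ u → a ≤ u → u = x)

/-- The rank of a matroid scheme: the common value of `ρ` on maximal elements
(equal to the maximum value of `ρ`). -/
noncomputable def schemeRank {S : Type*} [Fintype S] (ρ : S → ℕ) : ℕ :=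
  sSup (Set.range ρ)

/-- The Tutte polynomial of a matroid scheme, as a two-variable integer function. -/
noncomputable def tutte {S : Type*} [PartialOrder S] [OrderBot S] [Fintype S]
    (ρ : S → ℕ) (x y : ℤ) : ℤ :=
  ∑ w : S, (x - 1) ^ (schemeRank ρ - ρ w) * (y - 1) ^ (natRank w - ρ w)

/-- An element of a poset is an order-atom if it covers a global minimum. -/
def OrdAtom {P : Type*} [PartialOrder P] (a : P) : Prop :=
  ∃ b : P, (∀ z : P, b ≤ z) ∧ b ⋖ a

/-- A partial order is a geometric lattice: it is bounded below, every pair has a least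
upper bound and greatest lower bound, it is atomistic, and it is (upper) semimodular. -/
def IsGeomLatOrder (P : Type*) [PartialOrder P] : Prop :=
  (∃ b : P, ∀ x : P, b ≤ x) ∧
  (∀ x y : P, ∃ u : P, IsLUB {x, y} u) ∧
  (∀ x y : P, ∃ l : P, IsGLB {x, y} l) ∧
  (∀ x : P, IsLUB {a : P | OrdAtom a ∧ a ≤ x} x) ∧
  (∀ x y m j : P, IsGLB {x, y} m → IsLUB {x, y} j → m ⋖ x → y ⋖ j)

/-- A geometric poset: a finite bounded-below poset with rank function `rk`
satisfying (G1) and (G2). -/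
def IsGeometricPoset (P : Type*) [PartialOrder P] [OrderBot P] [Fintype P]
    (rk : P → ℕ) : Prop :=
  rk ⊥ = 0 ∧
  (∀ ⦃x y : P⦄, x ≤ y → rk x ≤ rk y) ∧
  (∀ x y : P, x ⋖ y → rk y = rk x + 1) ∧
  (∀ m : P, IsMax m → IsGeomLatOrder (Set.Iic m)) ∧
  (∀ (x : P) (A : Set P), (∀ a ∈ A, IsAtom a) →
    ∀ y ∈ mubSet A, rk x < rk y → rk y = Nat.card A →
      ∃ a ∈ A, ¬ a ≤ x ∧ ∃ w : P, x ≤ w ∧ a ≤ w)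


section Helpers

variable {S : Type*} [PartialOrder S] [OrderBot S]

lemma isAtom_Iic_iff {u : S} (a : Set.Iic u) : IsAtom a ↔ IsAtom (a : S) := by
  constructor
  · rintro ⟨h1, h2⟩
    refine ⟨fun hb => h1 (Subtype.ext hb), fun b hb => ?_⟩
    have hbu : b ≤ u := (le_of_lt hb).trans a.2
    have := h2 ⟨b, hbu⟩ (by exact Subtype.mk_lt_mk.2 hb)
    exact congrArg Subtype.val this
  · rintro ⟨h1, h2⟩
    refine ⟨fun hb => h1 (congrArg Subtype.val hb), fun b hb => ?_⟩
    exact Subtype.ext (h2 b.1 (Subtype.coe_lt_coe.2 hb))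

lemma natRank_bot : natRank (⊥ : S) = 0 := by
  have : IsEmpty {a : S // IsAtom a ∧ a ≤ ⊥} :=
    ⟨fun a => a.2.1.1 (le_bot_iff.1 a.2.2)⟩
  rw [natRank]
  exact Nat.card_of_isEmpty

lemma natRank_atom {a : S} (ha : IsAtom a) : natRank a = 1 := by
  have hu : Unique {b : S // IsAtom b ∧ b ≤ a} := by
    refine ⟨⟨⟨a, ha, le_rfl⟩⟩, ?_⟩
    rintro ⟨b, hb, hba⟩
    rcases (ha.le_iff.1 hba) with h | h
    · exact absurd h hb.1
    · exact Subtype.ext h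
  rw [natRank]
  exact Nat.card_unique

lemma natRank_eq_card {u : S} (φ : Set.Iic u ≃o Set {a : S // IsAtom a ∧ a ≤ u})
    (v : S) (hv : v ≤ u) :
    natRank v = Nat.card (φ ⟨v, hv⟩ : Set {a : S // IsAtom a ∧ a ≤ u}) := by
  have e1 : {a : S // IsAtom a ∧ a ≤ v} ≃
      {p : Set.Iic u // IsAtom p ∧ p ≤ (⟨v, hv⟩ : Set.Iic u)} :=
    { toFun := fun a => ⟨⟨a.1, a.2.2.trans hv⟩,
        (isAtom_Iic_iff _).2 a.2.1, Subtype.mk_le_mk.2 a.2.2⟩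
      invFun := fun p => ⟨p.1.1, (isAtom_Iic_iff _).1 p.2.1, p.2.2⟩
      left_inv := fun a => rfl
      right_inv := fun p => rfl }
  have e2 : {p : Set.Iic u // IsAtom p ∧ p ≤ (⟨v, hv⟩ : Set.Iic u)} ≃
      {q : Set {a : S // IsAtom a ∧ a ≤ u} // IsAtom q ∧ q ≤ φ ⟨v, hv⟩} := by
    refine φ.toEquiv.subtypeEquiv fun p => ?_
    constructor
    · rintro ⟨h1, h2⟩
      exact ⟨(φ.isAtom_iff p).2 h1, φ.le_iff_le.2 h2⟩
    · rintro ⟨h1, h2⟩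
      exact ⟨(φ.isAtom_iff p).1 h1, φ.le_iff_le.1 h2⟩
  have e3 : (φ ⟨v, hv⟩ : Set {a : S // IsAtom a ∧ a ≤ u}) ≃
      {q : Set {a : S // IsAtom a ∧ a ≤ u} // IsAtom q ∧ q ≤ φ ⟨v, hv⟩} := by
    refine Equiv.ofBijective
      (fun t => ⟨{t.1}, Set.isAtom_iff.2 ⟨t.1, rfl⟩, Set.singleton_subset_iff.2 t.2⟩) ⟨?_, ?_⟩
    · intro s t hst
      have : ({s.1} : Set _) = {t.1} := congrArg Subtype.val hst
      exact Subtype.ext (Set.singleton_eq_singleton_iff.1 this)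
    · rintro ⟨q, hq, hqW⟩
      obtain ⟨t, rfl⟩ := Set.isAtom_iff.1 hq
      exact ⟨⟨t, hqW rfl⟩, rfl⟩
  rw [natRank]
  exact Nat.card_congr (e1.trans (e2.trans e3.symm))

end Helpers

section Main

variable {S : Type*} [PartialOrder S] [OrderBot S] [Fintype S]

lemma exists_circuit_le {ρ : S → ℕ} {w : S} (hw : ρ w < natRank w) :
    ∃ z ∈ Circuits ρ, z ≤ w := by
  classical
  have hne : (Finset.univ.filter fun z : S => ρ z < natRank z ∧ z ≤ w).Nonempty :=
    ⟨w, by simp [hw]⟩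
  obtain ⟨z, hz, hmin⟩ := Finset.exists_minimal hne
  simp only [Finset.mem_filter, Finset.mem_univ, true_and] at hz
  refine ⟨z, ⟨hz.1, fun y hy hyz => ?_⟩, hz.2⟩
  by_contra hne'
  exact hne' (le_antisymm hyz (hmin (by simp [hy, hyz.trans hz.2]) hyz))

end Main

/-- Proposition 6.7: the circuits of a matroid scheme satisfy (C1)–(C3). -/
theorem statement10 {S : Type*} [PartialOrder S] [OrderBot S] [Fintype S]
    (ρ : S → ℕ) (h : IsMatroidScheme ρ) :
    ((⊥ : S) ∉ Circuits ρ) ∧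
    (∀ x y : S, x ∈ Circuits ρ → y ∈ Circuits ρ → x ≤ y → x = y) ∧
    (∀ x y u a : S, x ∈ Circuits ρ → y ∈ Circuits ρ → x ≠ y → u ∈ mub x y →
      IsAtom a → (∃ l ∈ mlb x y, a ≤ l) →
      ∃ z ∈ Circuits ρ, z ≤ u ∧ ¬ a ≤ z) := by
  classical
  refine ⟨?_, ?_, ?_⟩
  · intro hbot
    have h0 := hbot.1
    rw [natRank_bot] at h0
    exact Nat.not_lt_zero _ h0
  · intro x y hx hy hxy
    exact hy.2 x hx.1 hxy
  · intro x y u a hx hy hxy hu ha hl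
    obtain ⟨l, hlmem, hal⟩ := hl
    obtain ⟨hlx, hly, hlmax⟩ := hlmem
    obtain ⟨hxu, hyu, humin⟩ := hu
    have hlu : l ≤ u := hlx.trans hxu
    have hau : a ≤ u := hal.trans hlu
    -- l is independent
    have hlrk : ρ l = natRank l := by
      by_contra hne
      have hdep : ρ l < natRank l := lt_of_le_of_ne (h.M1 l) hne
      have h1 : l = x := hx.2 l hdep hlx
      subst h1
      exact hxy (hy.2 l hx.1 hly)
    obtain ⟨φ⟩ := h.simplicial u
    set At := {b : S // IsAtom b ∧ b ≤ u} with hAt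
    set Ax : Set At := φ ⟨x, hxu⟩ with hAxdef
    set Ay : Set At := φ ⟨y, hyu⟩ with hAydef
    set Al : Set At := φ ⟨l, hlu⟩ with hAldef
    set Ta : Set At := φ ⟨a, hau⟩ with hTadef
    have htop : φ ⟨u, le_rfl⟩ = Set.univ := by
      have h1 : (⟨u, le_rfl⟩ : Set.Iic u) = ⊤ := rfl
      rw [h1, map_top]
      rfl
    -- Ax ∪ Ay = univ
    have hunion : Ax ∪ Ay = Set.univ := by
      set m := φ.symm (Ax ∪ Ay) with hm
      have hφm : φ m = Ax ∪ Ay := φ.apply_symm_apply _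
      have hxm : x ≤ m.1 := by
        have : (⟨x, hxu⟩ : Set.Iic u) ≤ m := by
          rw [← φ.le_iff_le, hφm]; exact Set.subset_union_left
        exact this
      have hym : y ≤ m.1 := by
        have : (⟨y, hyu⟩ : Set.Iic u) ≤ m := by
          rw [← φ.le_iff_le, hφm]; exact Set.subset_union_right
        exact this
      have hmu : m.1 = u := humin m.1 hxm hym m.2
      have : m = ⟨u, le_rfl⟩ := Subtype.ext hmu
      rw [← hφm, this, htop]
    -- Ax ∩ Ay = Al
    have hinter : Ax ∩ Ay = Al := by
      set m := φ.symm (Ax ∩ Ay) with hm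
      have hφm : φ m = Ax ∩ Ay := φ.apply_symm_apply _
      have hmx : m.1 ≤ x := by
        have : m ≤ (⟨x, hxu⟩ : Set.Iic u) := by
          rw [← φ.le_iff_le, hφm]; exact Set.inter_subset_left
        exact this
      have hmy : m.1 ≤ y := by
        have : m ≤ (⟨y, hyu⟩ : Set.Iic u) := by
          rw [← φ.le_iff_le, hφm]; exact Set.inter_subset_right
        exact this
      have hlm : l ≤ m.1 := by
        have h1 : (⟨l, hlu⟩ : Set.Iic u) ≤ m := by
          rw [← φ.le_iff_le, hφm]
          exact Set.subset_inter (φ.le_iff_le.2 (Subtype.mk_le_mk.2 hlx))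
            (φ.le_iff_le.2 (Subtype.mk_le_mk.2 hly))
        exact h1
      have hml : m.1 = l := hlmax m.1 hmx hmy hlm
      have : m = ⟨l, hlu⟩ := Subtype.ext hml
      rw [← hφm, this]
    -- cardinalities
    have hcx : natRank x = Ax.ncard := by
      rw [hAxdef, natRank_eq_card φ x hxu, Nat.card_coe_set_eq]
    have hcy : natRank y = Ay.ncard := by
      rw [hAydef, natRank_eq_card φ y hyu, Nat.card_coe_set_eq]
    have hcl : natRank l = Al.ncard := by
      rw [hAldef, natRank_eq_card φ l hlu, Nat.card_coe_set_eq]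
    have hcu : natRank u = (Set.univ : Set At).ncard := by
      rw [natRank_eq_card φ u le_rfl, htop, Nat.card_coe_set_eq]
    have hca : Ta.ncard = 1 := by
      rw [← Nat.card_coe_set_eq, hTadef, ← natRank_eq_card φ a hau, natRank_atom ha]
    have hie : natRank u + natRank l = natRank x + natRank y := by
      have := Set.ncard_union_add_ncard_inter Ax Ay
      rw [hunion, hinter] at this
      rw [hcu, hcl, hcx, hcy, this]
    -- the element w = u minus a
    set w' := φ.symm (Set.univ \ Ta) with hw'
    set w := w'.1 with hwdef
    have hwu : w ≤ u := w'.2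
    have hφw : φ ⟨w, hwu⟩ = Set.univ \ Ta := by
      have : (⟨w, hwu⟩ : Set.Iic u) = w' := Subtype.ext rfl
      rw [this]; exact φ.apply_symm_apply _
    have hcw : natRank w = natRank u - 1 := by
      rw [natRank_eq_card φ w hwu, hφw, Nat.card_coe_set_eq,
        Set.ncard_diff (Set.subset_univ Ta), hca, hcu]
    -- rank inequalities
    have hM3' : ρ u + ρ l ≤ ρ x + ρ y :=
      h.M3 x y u l ⟨hxu, hyu, humin⟩ ⟨hlx, hly, hlmax⟩
    have hwdep : ρ w < natRank w := by
      have h1 : ρ w ≤ ρ u := h.M2 hwu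
      have h2 : ρ x < natRank x := hx.1
      have h3 : ρ y < natRank y := hy.1
      omega
    obtain ⟨z, hz, hzw⟩ := exists_circuit_le hwdep
    refine ⟨z, hz, hzw.trans hwu, ?_⟩
    intro haz
    have haw : a ≤ w := haz.trans hzw
    have hTaw : Ta ⊆ Set.univ \ Ta := by
      rw [← hφw]
      exact φ.le_iff_le.2 (Subtype.mk_le_mk.2 haw)
    obtain ⟨t, ht⟩ := Set.ncard_eq_one.1 hca
    have : t ∈ Set.univ \ Ta := hTaw (by rw [ht]; exact rfl)
    exact this.2 (by rw [ht]; exact rfl)
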